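/- In the graph G15, the minimum distance between any two distinct vertices of degree 2 is exactly 4. -/
import Mathlib


open SimpleGraph

/-- The graph `G₁₅` of the paper, with vertices `0,…,14` standing for `1,…,15`. -/
def G15graph : SimpleGraph (Fin 15) :=
  SimpleGraph.fromRel (fun u v => ((u.val, v.val) ∈
    [(0,1),(0,14),(1,14),(1,2),(2,3),(2,12),(3,11),(11,4),(3,13),(4,5),(4,9),
     (5,6),(5,10),(6,7),(6,8),(7,8),(8,9),(9,10),(10,12),(12,13),(13,14)] : Prop))

noncomputable instance : DecidableRel G15graph.Adj := Classical.decRel _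

def G15L : List (ℕ × ℕ) :=
  [(0,1),(0,14),(1,14),(1,2),(2,3),(2,12),(3,11),(11,4),(3,13),(4,5),(4,9),
   (5,6),(5,10),(6,7),(6,8),(7,8),(8,9),(9,10),(10,12),(12,13),(13,14)]

def adjP (x y : Fin 15) : Prop :=
  x ≠ y ∧ ((x.val, y.val) ∈ G15L ∨ (y.val, x.val) ∈ G15L)

instance adjP.dec : ∀ x y : Fin 15, Decidable (adjP x y) := fun x y => by
  unfold adjP; infer_instance

lemma adj_iff (x y : Fin 15) : G15graph.Adj x y ↔ adjP x y := Iff.rfl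

lemma deg_eq (x : Fin 15) :
    G15graph.degree x = (Finset.univ.filter (adjP x)).card := by
  have h : G15graph.neighborFinset x = Finset.univ.filter (adjP x) := by
    ext y
    simp only [SimpleGraph.mem_neighborFinset, Finset.mem_filter, Finset.mem_univ, true_and]
    exact adj_iff x y
  rw [SimpleGraph.degree, h]

lemma deg2_iff (x : Fin 15) :
    (Finset.univ.filter (adjP x)).card = 2 ↔ (x = 0 ∨ x = 7 ∨ x = 11) := by
  revert x; decide

lemma walk_le (f : Fin 15 → ℕ) (h : ∀ a b : Fin 15, adjP a b → f b ≤ f a + 1) :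
    ∀ {v w : Fin 15} (p : G15graph.Walk v w), f w ≤ f v + p.length := by
  intro v w p
  induction p with
  | nil => simp
  | @cons a b c hadj p ih =>
      have := h a b ((adj_iff a b).mp hadj)
      simp only [SimpleGraph.Walk.length_cons]
      omega

lemma dist_lb (f : Fin 15 → ℕ) (h : ∀ a b : Fin 15, adjP a b → f b ≤ f a + 1)
    {v w : Fin 15} (hr : G15graph.Reachable v w) :
    f w ≤ f v + G15graph.dist v w := by
  obtain ⟨p, hp⟩ := hr.exists_walk_length_eq_dist
  rw [← hp]
  exact walk_le f h p

def f0 : Fin 15 → ℕ := ![0,1,2,3,5,5,6,7,6,5,4,4,3,2,1]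
def f7 : Fin 15 → ℕ := ![7,6,5,5,3,2,1,0,1,2,3,4,4,5,6]

lemma hf0 : ∀ a b : Fin 15, adjP a b → f0 b ≤ f0 a + 1 := by decide
lemma hf7 : ∀ a b : Fin 15, adjP a b → f7 b ≤ f7 a + 1 := by decide

def e (x y : Fin 15) (h : adjP x y := by decide) : G15graph.Adj x y :=
  (adj_iff x y).mpr h

/-- walk 0-1-2-3-11 -/
def w011 : G15graph.Walk 0 11 :=
  .cons (e 0 1) (.cons (e 1 2) (.cons (e 2 3) (.cons (e 3 11) .nil)))

/-- walk 7-6-5-4-11 -/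
def w711 : G15graph.Walk 7 11 :=
  .cons (e 7 6) (.cons (e 6 5) (.cons (e 5 4) (.cons (e 4 11) .nil)))

/-- walk 0-…-11-4-5-6-7 -/
def w07 : G15graph.Walk 0 7 :=
  w011.append (.cons (e 11 4) (.cons (e 4 5) (.cons (e 5 6) (.cons (e 6 7) .nil))))

lemma r011 : G15graph.Reachable 0 11 := ⟨w011⟩
lemma r711 : G15graph.Reachable 7 11 := ⟨w711⟩
lemma r07 : G15graph.Reachable 0 7 := ⟨w07⟩

lemma d011 : 4 ≤ G15graph.dist 0 11 := by
  have h := dist_lb f0 hf0 r011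
  have h1 : f0 0 = 0 := rfl
  have h2 : f0 11 = 4 := rfl
  omega

lemma d07 : 4 ≤ G15graph.dist 0 7 := by
  have h := dist_lb f0 hf0 r07
  have h1 : f0 0 = 0 := rfl
  have h2 : f0 7 = 7 := rfl
  omega

lemma d711 : 4 ≤ G15graph.dist 7 11 := by
  have h := dist_lb f7 hf7 r711
  have h1 : f7 7 = 0 := rfl
  have h2 : f7 11 = 4 := rfl
  omega

lemma dist711 : G15graph.dist 7 11 = 4 := by
  have h1 : G15graph.dist 7 11 ≤ 4 := by
    have h := SimpleGraph.dist_le w711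
    have h2 : w711.length = 4 := rfl
    omega
  have h2 := d711
  omega

/-- In `G₁₅`, the minimum distance between two distinct vertices of degree `2` is exactly `4`. -/
theorem stmt13 :
    (∀ v w : Fin 15, v ≠ w → G15graph.degree v = 2 → G15graph.degree w = 2 →
      4 ≤ G15graph.dist v w) ∧
    (∃ v w : Fin 15, v ≠ w ∧ G15graph.degree v = 2 ∧ G15graph.degree w = 2 ∧
      G15graph.dist v w = 4) := by
  have deg2 : ∀ x : Fin 15, G15graph.degree x = 2 ↔ (x = 0 ∨ x = 7 ∨ x = 11) := by
    intro x; rw [deg_eq]; exact deg2_iff x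
  constructor
  · intro v w hne hv hw
    rcases (deg2 v).mp hv with rfl | rfl | rfl <;>
      rcases (deg2 w).mp hw with rfl | rfl | rfl <;>
      first
        | exact absurd rfl hne
        | exact d07
        | exact d011
        | exact d711
        | (rw [SimpleGraph.dist_comm]; first | exact d07 | exact d011 | exact d711)
  · exact ⟨7, 11, by decide, (deg2 7).mpr (by decide), (deg2 11).mpr (by decide), dist711⟩
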